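/- Let W be a finite Weyl group with positive roots R^+, k a W-invariant function on R, and λ with λ(α^∨) ∉ {0, k_α} for all α ∈ R. Define the c-function c_k(λ) = ∏_{α ∈ R^+} (λ(α^∨) − k_α)/λ(α^∨) and j_w^k(λ) = ∏_{α ∈ R^+ ∩ w^{−1}R^−} (λ(α^∨)+k_α)/(λ(α^∨)−k_α) for w ∈ W. Then j_w^k(λ) = c_k(wλ)/c_k(λ) for all w ∈ W. -/

import Mathlib

open scoped Classical

/-- `j_w^k(λ) = c_k(wλ)/c_k(λ)` for `w` in the finite Weyl group:
the product of `(λ(α^∨)+k_α)/(λ(α^∨)-k_α)` over the inversion set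
`R⁺ ∩ w⁻¹R⁻ = {α ∈ R⁺ : wα ∈ R⁻}` equals the quotient of the c-functions,
where `c_k(λ) = ∏_{α ∈ R⁺} (λ(α^∨) - k_α)/λ(α^∨)` and
`(wλ)(α^∨) = λ((w⁻¹α)^∨)`. Here `L α` denotes `λ(α^∨)`, `w` acts linearly on
the roots preserving `R` and the `W`-invariant multiplicity `k`, and
`λ(α^∨) ∉ {0, k_α}` for all `α ∈ R`. -/
theorem j_eq_c_quotient {V : Type*} [AddCommGroup V] [Module ℝ V]
    (R Rp : Finset (Module.Dual ℝ V)) (hRp : Rp ⊆ R)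
    (hneg : ∀ α ∈ R, -α ∈ R)
    (hsplit : ∀ α ∈ R, (α ∈ Rp ↔ -α ∉ Rp))
    (hcover : ∀ α ∈ R, α ∈ Rp ∨ -α ∈ Rp)
    (w : Module.Dual ℝ V ≃ₗ[ℝ] Module.Dual ℝ V)
    (hwR : ∀ α ∈ R, w α ∈ R) (hwR' : ∀ α ∈ R, w.symm α ∈ R)
    (L : Module.Dual ℝ V → ℂ) (hL : ∀ α ∈ R, L (-α) = -L α)
    (k : Module.Dual ℝ V → ℂ)
    (hkneg : ∀ α ∈ R, k (-α) = k α) (hkw : ∀ α ∈ R, k (w α) = k α)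
    (hreg : ∀ α ∈ R, L α ≠ 0 ∧ L α ≠ k α) :
    (∏ α ∈ Rp.filter (fun α => -(w α) ∈ Rp), (L α + k α) / (L α - k α)) =
      (∏ α ∈ Rp, (L (w.symm α) - k α) / L (w.symm α)) /
        (∏ α ∈ Rp, (L α - k α) / L α) := by
  set I := Rp.filter (fun α => -(w α) ∈ Rp) with hI
  set N := Rp.filter (fun α => -(w α) ∉ Rp) with hN
  have hIR : ∀ α ∈ I, α ∈ R := fun α hα => hRp (Finset.mem_filter.1 hα).1
  have hNR : ∀ α ∈ N, α ∈ R := fun α hα => hRp (Finset.mem_filter.1 hα).1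
  have hnum : (∏ β ∈ Rp, (L (w.symm β) - k β) / L (w.symm β))
      = (∏ β ∈ Rp.filter (fun β => w.symm β ∈ Rp), (L (w.symm β) - k β) / L (w.symm β))
        * (∏ β ∈ Rp.filter (fun β => w.symm β ∉ Rp), (L (w.symm β) - k β) / L (w.symm β)) :=
    (Finset.prod_filter_mul_prod_filter_not Rp _ _).symm
  have h1 : (∏ β ∈ Rp.filter (fun β => w.symm β ∈ Rp), (L (w.symm β) - k β) / L (w.symm β))
      = ∏ α ∈ N, (L α - k α) / L α := by
    refine (Finset.prod_bij' (fun α _ => w α) (fun β _ => w.symm β) ?_ ?_ ?_ ?_ ?_).symm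
    · intro α hα
      obtain ⟨hα1, hα2⟩ := Finset.mem_filter.1 hα
      have hwα : w α ∈ R := hwR α (hRp hα1)
      have : w α ∈ Rp := (hcover (w α) hwα).resolve_right hα2
      refine Finset.mem_filter.2 ⟨this, ?_⟩
      simpa using hα1
    · intro β hβ
      obtain ⟨hβ1, hβ2⟩ := Finset.mem_filter.1 hβ
      refine Finset.mem_filter.2 ⟨hβ2, ?_⟩
      simp only [LinearEquiv.apply_symm_apply]
      exact (hsplit β (hRp hβ1)).1 hβ1
    · intro α hα; simp
    · intro β hβ; simp
    · intro α hα
      have hα1 : α ∈ Rp := (Finset.mem_filter.1 hα).1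
      rw [LinearEquiv.symm_apply_apply, hkw α (hRp hα1)]
  have h2 : (∏ β ∈ Rp.filter (fun β => w.symm β ∉ Rp), (L (w.symm β) - k β) / L (w.symm β))
      = ∏ α ∈ I, (L α + k α) / L α := by
    refine (Finset.prod_bij' (fun α _ => -(w α)) (fun β _ => -(w.symm β)) ?_ ?_ ?_ ?_ ?_).symm
    · intro α hα
      obtain ⟨hα1, hα2⟩ := Finset.mem_filter.1 hα
      refine Finset.mem_filter.2 ⟨hα2, ?_⟩
      simp only [map_neg, LinearEquiv.symm_apply_apply, neg_neg]
      exact (hsplit α (hRp hα1)).1 hα1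
    · intro β hβ
      obtain ⟨hβ1, hβ2⟩ := Finset.mem_filter.1 hβ
      have hs : w.symm β ∈ R := hwR' β (hRp hβ1)
      have hmem : -(w.symm β) ∈ Rp := (hcover _ hs).resolve_left hβ2
      refine Finset.mem_filter.2 ⟨hmem, ?_⟩
      simpa using hβ1
    · intro α hα; simp
    · intro β hβ; simp
    · intro α hα
      obtain ⟨hα1, hα2⟩ := Finset.mem_filter.1 hα
      have hαR : α ∈ R := hRp hα1
      have hwα : w α ∈ R := hwR α hαR
      have e1 : w.symm (-(w α)) = -α := by simp
      have e2 : k (-(w α)) = k α := by rw [hkneg _ hwα, hkw _ hαR]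
      rw [e1, e2, hL α hαR]
      have h0 : L α ≠ 0 := (hreg α hαR).1
      rw [div_eq_div_iff h0 (neg_ne_zero.2 h0)]
      ring
  have hden : (∏ α ∈ Rp, (L α - k α) / L α)
      = (∏ α ∈ I, (L α - k α) / L α) * (∏ α ∈ N, (L α - k α) / L α) :=
    (Finset.prod_filter_mul_prod_filter_not Rp _ _).symm
  have hPN : (∏ α ∈ N, (L α - k α) / L α) ≠ 0 := by
    refine Finset.prod_ne_zero_iff.2 fun α hα => ?_
    have h := hreg α (hNR α hα)
    exact div_ne_zero (sub_ne_zero.2 h.2) h.1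
  have hPI : (∏ α ∈ I, (L α - k α) / L α) ≠ 0 := by
    refine Finset.prod_ne_zero_iff.2 fun α hα => ?_
    have h := hreg α (hIR α hα)
    exact div_ne_zero (sub_ne_zero.2 h.2) h.1
  rw [hnum, h1, h2, hden]
  rw [mul_comm (∏ α ∈ N, (L α - k α) / L α) (∏ α ∈ I, (L α + k α) / L α),
    mul_div_mul_comm]
  rw [div_self hPN, mul_one, ← Finset.prod_div_distrib]
  refine Finset.prod_congr rfl fun α hα => ?_
  have h := hreg α (hIR α hα)
  rw [div_div_div_cancel_right₀]
  exact h.1
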